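/- Let C, θ : ℝ → (0,∞) be continuously differentiable with 0 < θ(x) ≤ M_θ for all x and with L_{C⁻¹} = sup_x |(1/C)′(x)| < ∞. For ε > 0, Ω > 0 and 0 ≤ a < b, define Z¹ = (2i/((b−a)ε)) ∫_a^b e^{−iΩη} ∫₀^η (sin(Ωξ)/C(ξ)) · exp( −(η−ξ)/(εθ(η)) ) dξ dη and Z² = (2i/((b−a)ε)) ∫_a^b (e^{−iΩη}/C(η)) ∫₀^η sin(Ωξ) · exp( −(η−ξ)/(εθ(η)) ) dξ dη. Then |Z¹ − Z²| ≤ 2 L_{C⁻¹} M_θ² ε. -/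

import Mathlib

open Real Complex MeasureTheory intervalIntegral


lemma key_int_bound {τ η : ℝ} (hτ : 0 < τ) (hη : 0 ≤ η) :
    ∫ ξ in (0:ℝ)..η, (η - ξ) * Real.exp (-(η - ξ) / τ) ≤ τ ^ 2 := by
  have hτ' : τ ≠ 0 := ne_of_gt hτ
  have hder : ∀ ξ ∈ Set.uIcc (0:ℝ) η,
      HasDerivAt (fun ξ => τ * (η - ξ + τ) * Real.exp (-(η - ξ) / τ))
        ((η - ξ) * Real.exp (-(η - ξ) / τ)) ξ := by
    intro ξ _
    have h1 : HasDerivAt (fun ξ : ℝ => -(η - ξ) / τ) (1 / τ) ξ := by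
      have e : (fun ξ : ℝ => -(η - ξ) / τ) = fun ξ : ℝ => ξ * (1/τ) + (-η/τ) := by
        funext x; field_simp; ring
      rw [e]
      simpa using ((hasDerivAt_id ξ).mul_const (1/τ)).add_const (-η/τ)
    have h3 : HasDerivAt (fun ξ : ℝ => τ * (η - ξ + τ)) (-τ) ξ := by
      have e : (fun ξ : ℝ => τ * (η - ξ + τ)) = fun ξ : ℝ => ξ * (-τ) + τ * (η + τ) := by
        funext x; ring
      rw [e]
      simpa using ((hasDerivAt_id ξ).mul_const (-τ)).add_const (τ * (η + τ))
    have := h3.mul h1.exp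
    convert this using 1
    · rfl
    · rfl
    · rfl
    have hτi : τ * τ⁻¹ = 1 := mul_inv_cancel₀ hτ'
    linear_combination (-((η - ξ) * Real.exp (-(η - ξ) / τ) + τ * Real.exp (-(η - ξ) / τ))) * hτi
  have hint : IntervalIntegrable (fun ξ => (η - ξ) * Real.exp (-(η - ξ) / τ)) volume 0 η :=
    (Continuous.mul (by continuity) (by continuity)).intervalIntegrable _ _
  rw [intervalIntegral.integral_eq_sub_of_hasDerivAt hder hint]
  have h0 : (0:ℝ) ≤ τ * (η + τ) * Real.exp (-(η - 0) / τ) := by positivity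
  simp only [sub_self, neg_zero, zero_div, Real.exp_zero, mul_one, sub_zero] at *
  nlinarith [Real.exp_pos (-η / τ)]

lemma lip_bound (C : ℝ → ℝ) (hCC1 : ContDiff ℝ 1 C) (hCpos : ∀ x, 0 < C x)
    (L : ℝ) (hL : ∀ x, |deriv (fun y => 1 / C y) x| ≤ L) (x y : ℝ) :
    |1 / C x - 1 / C y| ≤ L * |x - y| := by
  have hdiff : ∀ z : ℝ, DifferentiableAt ℝ (fun y => 1 / C y) z := fun z =>
    (differentiableAt_const 1).div ((hCC1.differentiable one_ne_zero) z) (ne_of_gt (hCpos z))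
  have := convex_univ.norm_image_sub_le_of_norm_deriv_le (f := fun y => 1 / C y)
    (fun z _ => hdiff z) (fun z _ => hL z) (Set.mem_univ y) (Set.mem_univ x)
  simpa [Real.norm_eq_abs] using this

/-- **Second approximation step in the slow-drift asymptotics:** replacing `C(ξ)` by
`C(η)` in the inner integral changes the rescaled measured impedance by at most
`2 L_{C⁻¹} M_θ² ε`. -/
theorem slow_drift_second_approximation
    (C θ : ℝ → ℝ) (hCC1 : ContDiff ℝ 1 C) (hθC1 : ContDiff ℝ 1 θ)
    (hCpos : ∀ x, 0 < C x) (hθpos : ∀ x, 0 < θ x)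
    (Mθ : ℝ) (hMθ : ∀ x, θ x ≤ Mθ)
    (LCinv : ℝ) (hLCinv : ∀ x, |deriv (fun y => 1 / C y) x| ≤ LCinv)
    (ε Ω : ℝ) (hε : 0 < ε) (hΩ : 0 < Ω)
    (a b : ℝ) (ha : 0 ≤ a) (hab : a < b)
    (Z₁ Z₂ : ℂ)
    (hZ₁ : Z₁ = 2 * Complex.I / (((b : ℂ) - a) * ε) *
      ∫ η in a..b, Complex.exp (-Complex.I * Ω * η) *
        ((∫ ξ in (0 : ℝ)..η, Real.sin (Ω * ξ) / C ξ *
          Real.exp (-(η - ξ) / (ε * θ η)) : ℝ) : ℂ))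
    (hZ₂ : Z₂ = 2 * Complex.I / (((b : ℂ) - a) * ε) *
      ∫ η in a..b, Complex.exp (-Complex.I * Ω * η) / (C η : ℂ) *
        ((∫ ξ in (0 : ℝ)..η, Real.sin (Ω * ξ) *
          Real.exp (-(η - ξ) / (ε * θ η)) : ℝ) : ℂ)) :
    ‖Z₁ - Z₂‖ ≤ 2 * LCinv * Mθ ^ 2 * ε := by
  subst hZ₁ hZ₂
  have hbpos : (0:ℝ) < b - a := sub_pos.mpr hab
  have hCcont := hCC1.continuous
  have hθcont := hθC1.continuous
  have hL0 : 0 ≤ LCinv := le_trans (abs_nonneg _) (hLCinv 0)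
  have hτpos : ∀ η, 0 < ε * θ η := fun η => mul_pos hε (hθpos η)
  set f₁ : ℝ → ℝ → ℝ := fun η ξ => Real.sin (Ω * ξ) / C ξ * Real.exp (-(η - ξ) / (ε * θ η))
    with hf₁
  set f₂ : ℝ → ℝ → ℝ := fun η ξ => Real.sin (Ω * ξ) * Real.exp (-(η - ξ) / (ε * θ η)) with hf₂
  have hce : Continuous (fun p : ℝ × ℝ => Real.exp (-(p.1 - p.2) / (ε * θ p.1))) := by
    apply Real.continuous_exp.comp
    exact Continuous.div (by fun_prop) (by fun_prop) fun p => ne_of_gt (hτpos p.1)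
  have hcont1 : Continuous (Function.uncurry f₁) := by
    apply Continuous.mul _ hce
    exact Continuous.div (by fun_prop) (by fun_prop) fun p => ne_of_gt (hCpos p.2)
  have hcont2 : Continuous (Function.uncurry f₂) := Continuous.mul (by fun_prop) hce
  set I₁ : ℝ → ℝ := fun η => ∫ ξ in (0:ℝ)..η, f₁ η ξ with hI₁
  set I₂ : ℝ → ℝ := fun η => ∫ ξ in (0:ℝ)..η, f₂ η ξ with hI₂
  have hI₁c : Continuous I₁ :=
    continuous_parametric_intervalIntegral_of_continuous hcont1 continuous_id
  have hI₂c : Continuous I₂ :=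
    continuous_parametric_intervalIntegral_of_continuous hcont2 continuous_id
  set F₁ : ℝ → ℂ := fun η => Complex.exp (-Complex.I * Ω * η) * ((I₁ η : ℝ) : ℂ) with hF₁
  set F₂ : ℝ → ℂ := fun η => Complex.exp (-Complex.I * Ω * η) / (C η : ℂ) * ((I₂ η : ℝ) : ℂ)
    with hF₂
  have hF₁c : Continuous F₁ := by
    apply Continuous.mul _ (Complex.continuous_ofReal.comp hI₁c)
    exact Complex.continuous_exp.comp (by fun_prop)
  have hF₂c : Continuous F₂ := by
    apply Continuous.mul _ (Complex.continuous_ofReal.comp hI₂c)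
    apply Continuous.div (Complex.continuous_exp.comp (by fun_prop))
      (Complex.continuous_ofReal.comp hCcont)
    exact fun x => Complex.ofReal_ne_zero.mpr (hCpos x).ne'
  -- pointwise bound
  have key : ∀ η : ℝ, 0 ≤ η → ‖F₁ η - F₂ η‖ ≤ LCinv * Mθ ^ 2 * ε ^ 2 := by
    intro η hη
    have hτ : 0 < ε * θ η := hτpos η
    have hfac : F₁ η - F₂ η =
        Complex.exp (-Complex.I * Ω * η) * (((I₁ η - I₂ η / C η : ℝ)) : ℂ) := by
      simp only [hF₁, hF₂]
      push_cast
      ring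
    have habs1 : ‖F₁ η - F₂ η‖ = |I₁ η - I₂ η / C η| := by
      rw [hfac, norm_mul, Complex.norm_real, Real.norm_eq_abs, Complex.norm_exp]
      have : (-Complex.I * Ω * η).re = 0 := by simp
      rw [this, Real.exp_zero, one_mul]
    rw [habs1]
    have hg₁ : IntervalIntegrable (fun ξ => f₁ η ξ) volume 0 η :=
      (hcont1.comp (continuous_const.prodMk continuous_id)).intervalIntegrable _ _
    have hg₂ : IntervalIntegrable (fun ξ => f₂ η ξ / C η) volume 0 η :=
      (((hcont2.comp (continuous_const.prodMk continuous_id))).div_const _).intervalIntegrable _ _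
    set g : ℝ → ℝ := fun ξ => Real.sin (Ω * ξ) * (1 / C ξ - 1 / C η) *
        Real.exp (-(η - ξ) / (ε * θ η)) with hg
    have hgc : Continuous g := by
      apply Continuous.mul
      · apply Continuous.mul (by fun_prop)
        apply Continuous.sub
        · exact Continuous.div continuous_const hCcont fun x => (hCpos x).ne'
        · exact continuous_const
      · apply Real.continuous_exp.comp
        exact Continuous.div (by fun_prop) continuous_const fun _ => ne_of_gt hτ
    have hcomb : I₁ η - I₂ η / C η = ∫ ξ in (0:ℝ)..η, g ξ := by
      rw [hI₁, hI₂]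
      simp only
      rw [← intervalIntegral.integral_div, ← intervalIntegral.integral_sub hg₁ hg₂]
      apply intervalIntegral.integral_congr
      intro ξ _
      simp only [hf₁, hf₂, hg]
      ring
    rw [hcomb]
    have hptwise : ∀ ξ ∈ Set.Icc (0:ℝ) η,
        |g ξ| ≤ LCinv * ((η - ξ) * Real.exp (-(η - ξ) / (ε * θ η))) := by
      intro ξ hξ
      have hξη : ξ ≤ η := hξ.2
      have hs : |Real.sin (Ω * ξ)| ≤ 1 := Real.abs_sin_le_one _
      have hd : |1 / C ξ - 1 / C η| ≤ LCinv * (η - ξ) := by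
        have := lip_bound C hCC1 hCpos LCinv hLCinv ξ η
        rwa [abs_sub_comm ξ η, _root_.abs_of_nonneg (sub_nonneg.mpr hξη)] at this
      have he : (0:ℝ) < Real.exp (-(η - ξ) / (ε * θ η)) := Real.exp_pos _
      calc |g ξ| = |Real.sin (Ω * ξ)| * |1 / C ξ - 1 / C η| *
            Real.exp (-(η - ξ) / (ε * θ η)) := by
            rw [hg]; rw [abs_mul, abs_mul, abs_of_pos he]
        _ ≤ 1 * (LCinv * (η - ξ)) * Real.exp (-(η - ξ) / (ε * θ η)) := by
            apply mul_le_mul_of_nonneg_right _ he.le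
            exact mul_le_mul hs hd (abs_nonneg _) zero_le_one
        _ = LCinv * ((η - ξ) * Real.exp (-(η - ξ) / (ε * θ η))) := by ring
    calc |∫ ξ in (0:ℝ)..η, g ξ| ≤ ∫ ξ in (0:ℝ)..η, |g ξ| := by
          simpa [Real.norm_eq_abs] using
            intervalIntegral.norm_integral_le_integral_norm (f := g) (μ := volume) hη
      _ ≤ ∫ ξ in (0:ℝ)..η, LCinv * ((η - ξ) * Real.exp (-(η - ξ) / (ε * θ η))) := by
          apply intervalIntegral.integral_mono_on hη
            (hgc.abs.intervalIntegrable _ _)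
            ((Continuous.mul continuous_const (Continuous.mul (by fun_prop)
              (Real.continuous_exp.comp (Continuous.div (by fun_prop) continuous_const
                fun _ => ne_of_gt hτ)))).intervalIntegrable _ _)
          exact hptwise
      _ = LCinv * ∫ ξ in (0:ℝ)..η, (η - ξ) * Real.exp (-(η - ξ) / (ε * θ η)) :=
          intervalIntegral.integral_const_mul _ _
      _ ≤ LCinv * (ε * θ η) ^ 2 :=
          mul_le_mul_of_nonneg_left (key_int_bound hτ hη) hL0
      _ ≤ LCinv * Mθ ^ 2 * ε ^ 2 := by
          have h1 : θ η ^ 2 ≤ Mθ ^ 2 := pow_le_pow_left₀ (hθpos η).le (hMθ η) 2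
          nlinarith [mul_le_mul_of_nonneg_left h1 (mul_nonneg hL0 (sq_nonneg ε))]
  -- assemble
  have hint1 : IntervalIntegrable F₁ volume a b := hF₁c.intervalIntegrable _ _
  have hint2 : IntervalIntegrable F₂ volume a b := hF₂c.intervalIntegrable _ _
  rw [← mul_sub, ← intervalIntegral.integral_sub hint1 hint2]
  have hKabs : ‖2 * Complex.I / (((b : ℂ) - a) * ε)‖ = 2 / ((b - a) * ε) := by
    rw [show ((b:ℂ) - a) = (((b - a : ℝ)) : ℂ) by push_cast; ring]
    rw [norm_div, norm_mul, norm_mul, Complex.norm_I, Complex.norm_two, Complex.norm_real,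
      Complex.norm_real, Real.norm_eq_abs, Real.norm_eq_abs, abs_of_pos hbpos, abs_of_pos hε, mul_one]
  have hibound : ‖∫ η in a..b, (F₁ η - F₂ η)‖ ≤
      LCinv * Mθ ^ 2 * ε ^ 2 * |b - a| := by
    apply intervalIntegral.norm_integral_le_of_norm_le_const
    intro x hx
    rw [Set.uIoc_of_le hab.le] at hx
    exact key x (le_trans ha hx.1.le)
  rw [norm_mul, hKabs]
  calc 2 / ((b - a) * ε) * ‖∫ η in a..b, (F₁ η - F₂ η)‖
      ≤ 2 / ((b - a) * ε) * (LCinv * Mθ ^ 2 * ε ^ 2 * |b - a|) := by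
        apply mul_le_mul_of_nonneg_left hibound
        positivity
    _ = 2 * LCinv * Mθ ^ 2 * ε := by
        rw [abs_of_pos hbpos]
        field_simp
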